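/- For all real x, log(sinh(x)/x) ≤ x²/6 (with the convention sinh(0)/0 = 1); equivalently, sinh(x) ≤ x·exp(x²/6) for all x > 0. -/

import Mathlib

open Real Nat

lemma fact_ineq (n : ℕ) : 6 ^ n * n ! ≤ (2 * n + 1)! := by
  induction n with
  | zero => simp
  | succ k ih =>
    have h : 2 * (k + 1) + 1 = (2 * k + 1) + 2 := by ring
    rw [h]
    have : (2 * k + 1 + 2)! = (2 * k + 3) * ((2 * k + 2) * (2 * k + 1)!) := by
      rw [show 2 * k + 1 + 2 = (2 * k + 2) + 1 from by ring, Nat.factorial_succ,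
        show 2 * k + 2 = (2 * k + 1) + 1 from by ring, Nat.factorial_succ]
    rw [this]
    calc 6 ^ (k + 1) * (k + 1)! = 6 * (k + 1) * (6 ^ k * k !) := by
          rw [pow_succ, Nat.factorial_succ]; ring
      _ ≤ (2 * k + 3) * (2 * k + 2) * (6 ^ k * k !) := by
          apply Nat.mul_le_mul_right
          nlinarith
      _ ≤ (2 * k + 3) * (2 * k + 2) * (2 * k + 1)! := by
          exact Nat.mul_le_mul_left _ ih
      _ = (2 * k + 3) * ((2 * k + 2) * (2 * k + 1)!) := by ring

lemma sinh_le_aux {x : ℝ} (hx : 0 < x) : Real.sinh x ≤ x * Real.exp (x ^ 2 / 6) := by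
  have hs : HasSum (fun n : ℕ => x ^ (2 * n + 1) / ↑(2 * n + 1)!) (Real.sinh x) :=
    Real.hasSum_sinh x
  have he : HasSum (fun n : ℕ => (x ^ 2 / 6) ^ n / ↑n !) (Real.exp (x ^ 2 / 6)) := by
    rw [Real.exp_eq_exp_ℝ]
    exact NormedSpace.expSeries_div_hasSum_exp _
  have he' : HasSum (fun n : ℕ => x * ((x ^ 2 / 6) ^ n / ↑n !))
      (x * Real.exp (x ^ 2 / 6)) := he.mul_left x
  refine hasSum_le (fun n => ?_) hs he'
  have h1 : x * ((x ^ 2 / 6) ^ n / ↑n !) = x ^ (2 * n + 1) / (6 ^ n * ↑n !) := by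
    rw [div_pow, ← pow_mul]
    have h6 : (6 : ℝ) ^ n ≠ 0 := by positivity
    field_simp
    ring
  rw [h1]
  have hfac : (6 : ℝ) ^ n * ↑n ! ≤ ↑(2 * n + 1)! := by
    have := fact_ineq n
    exact_mod_cast this
  have hxp : 0 < x ^ (2 * n + 1) := pow_pos hx _
  apply div_le_div_of_nonneg_left hxp.le _ hfac
  positivity

theorem stmt2 :
    (∀ x : ℝ, x ≠ 0 → Real.log (Real.sinh x / x) ≤ x ^ 2 / 6) ∧
    (∀ x : ℝ, 0 < x → Real.sinh x ≤ x * Real.exp (x ^ 2 / 6)) := by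
  have key : ∀ x : ℝ, 0 < x → Real.log (Real.sinh x / x) ≤ x ^ 2 / 6 := by
    intro x hx
    have hsp : 0 < Real.sinh x := Real.sinh_pos_iff.mpr hx
    have h : Real.sinh x / x ≤ Real.exp (x ^ 2 / 6) := by
      rw [div_le_iff₀ hx, mul_comm]
      exact sinh_le_aux hx
    calc Real.log (Real.sinh x / x) ≤ Real.log (Real.exp (x ^ 2 / 6)) :=
          Real.log_le_log (by positivity) h
      _ = x ^ 2 / 6 := Real.log_exp _
  refine ⟨fun x hx => ?_, fun x hx => sinh_le_aux hx⟩
  rcases lt_or_gt_of_ne hx with h | h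
  · have : Real.sinh x / x = Real.sinh (-x) / (-x) := by
      rw [Real.sinh_neg, neg_div_neg_eq]
    rw [this]
    have := key (-x) (by linarith)
    simpa using this
  · exact key x h
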